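/- arXiv:2101.01922 — 2 statements merged into one kernel-verified Lean document; each statement's English description precedes it below -/
import Mathlib

section
/- Let p ∈ (0,2]. If (M,d,μ) satisfies (D') with constants C₀ ≥ 1 and N > 0, then there is a constant C, depending only on p, C₀ and N, such that for every measurable function F : M × (0,∞) → [0,∞] one has ‖Ṽ(F)‖_{L^p(μ)} ≤ C ‖A(F)‖_{L^p(μ)}. -/
open MeasureTheory Metric Set ENNReal Filter Topology

section AuxLemmas

lemma aux_Ioo {p : ℝ} (hp : 0 < p) {v : ℝ} (hv : 0 < v) :
    ∫⁻ l in Ioo (0:ℝ) v, ENNReal.ofReal (p * l ^ (p-1)) = ENNReal.ofReal (v ^ p) := by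
  have hint : IntegrableOn (fun l : ℝ => p * l ^ (p-1)) (Ioo 0 v) := by
    have := (intervalIntegral.intervalIntegrable_rpow' (a := 0) (b := v)
      (by linarith : (-1:ℝ) < p - 1)).const_mul p
    rw [intervalIntegrable_iff, uIoc_of_le hv.le] at this
    exact this.mono_set Ioo_subset_Ioc_self
  rw [← MeasureTheory.ofReal_integral_eq_lintegral_ofReal hint]
  · congr 1
    have h1 : ∫ l in Ioo (0:ℝ) v, p * l ^ (p-1) = ∫ l in (0:ℝ)..v, p * l ^ (p-1) := by
      rw [intervalIntegral.integral_of_le hv.le]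
      exact setIntegral_congr_set Ioo_ae_eq_Ioc
    rw [h1, intervalIntegral.integral_const_mul, integral_rpow (Or.inl (by linarith))]
    rw [Real.zero_rpow (by linarith : p - 1 + 1 ≠ 0)]
    have : p - 1 + 1 = p := by ring
    rw [this]
    field_simp
    simp
  · filter_upwards [self_mem_ae_restrict measurableSet_Ioo] with l hl
    exact mul_nonneg hp.le (Real.rpow_nonneg hl.1.le _)

lemma aux_Ioi {r : ℝ} (hr : r < -1) {a : ℝ} (ha : 0 < a) :
    ∫⁻ l in Ioi a, ENNReal.ofReal (l ^ r) = ENNReal.ofReal (-a ^ (r+1) / (r+1)) := by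
  rw [← MeasureTheory.ofReal_integral_eq_lintegral_ofReal
    (integrableOn_Ioi_rpow_of_lt hr ha)]
  · rw [integral_Ioi_rpow_of_lt hr ha]
  · filter_upwards [self_mem_ae_restrict measurableSet_Ioi] with l hl
    exact Real.rpow_nonneg (ha.trans hl).le _

lemma aux_pointwise {p : ℝ} (hp : 0 < p) (c : ℝ≥0∞) :
    ∫⁻ l in Ioi (0:ℝ), ENNReal.ofReal (p * l ^ (p-1)) *
      ({l : ℝ | ENNReal.ofReal l < c}.indicator (fun _ => 1) l) = c ^ p := by
  have hmeas : MeasurableSet {l : ℝ | ENNReal.ofReal l < c} :=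
    measurableSet_lt (by fun_prop) measurable_const
  have hmono : ∀ l : ℝ, ENNReal.ofReal (p * l ^ (p-1)) *
      ({l : ℝ | ENNReal.ofReal l < c}.indicator (fun _ => (1:ℝ≥0∞)) l)
      = {l : ℝ | ENNReal.ofReal l < c}.indicator (fun l => ENNReal.ofReal (p * l ^ (p-1))) l := by
    intro l
    by_cases h : ENNReal.ofReal l < c <;> simp [Set.indicator, h]
  simp_rw [hmono]
  rw [lintegral_indicator hmeas, Measure.restrict_restrict hmeas]
  rcases eq_or_ne c ⊤ with rfl | hc
  · have hset : {l : ℝ | ENNReal.ofReal l < ⊤} ∩ Ioi 0 = Ioi 0 := by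
      ext l; simp [ofReal_lt_top]
    rw [hset, ENNReal.top_rpow_of_pos hp, eq_top_iff]
    have hten : Tendsto (fun n : ℕ => ENNReal.ofReal ((n:ℝ) ^ p)) atTop (𝓝 ⊤) := by
      refine ENNReal.tendsto_ofReal_atTop.comp ?_
      exact (tendsto_rpow_atTop hp).comp tendsto_natCast_atTop_atTop
    refine le_of_tendsto hten (Filter.Eventually.of_forall fun n => ?_)
    calc ENNReal.ofReal ((n:ℝ) ^ p)
        ≤ ENNReal.ofReal (((n:ℝ)+1) ^ p) := by
          exact ENNReal.ofReal_le_ofReal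
            (Real.rpow_le_rpow (Nat.cast_nonneg n) (by linarith) hp.le)
      _ = ∫⁻ l in Ioo (0:ℝ) ((n:ℝ)+1), ENNReal.ofReal (p * l ^ (p-1)) :=
          (aux_Ioo hp (by positivity)).symm
      _ ≤ _ := lintegral_mono_set Ioo_subset_Ioi_self
  · rcases eq_or_ne c 0 with rfl | hc0
    · have hset : {l : ℝ | ENNReal.ofReal l < 0} ∩ Ioi 0 = ∅ := by
        ext l; simp
      rw [hset, ENNReal.zero_rpow_of_pos hp]
      simp
    · have hct : 0 < c.toReal := ENNReal.toReal_pos hc0 hc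
      have hset : {l : ℝ | ENNReal.ofReal l < c} ∩ Ioi 0 = Ioo 0 c.toReal := by
        ext l
        simp only [mem_inter_iff, mem_setOf_eq, mem_Ioi, mem_Ioo]
        constructor
        · rintro ⟨h1, h2⟩
          exact ⟨h2, (ENNReal.ofReal_lt_iff_lt_toReal h2.le hc).mp h1⟩
        · rintro ⟨h1, h2⟩
          exact ⟨(ENNReal.ofReal_lt_iff_lt_toReal h1.le hc).mpr h2, h1⟩
      rw [hset, aux_Ioo hp hct, ← ENNReal.ofReal_rpow_of_pos hct,
        ENNReal.ofReal_toReal hc]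

lemma aux_layercake {M : Type*} [MeasurableSpace M] (μ : Measure M) [SFinite μ]
    {p : ℝ} (hp : 0 < p) {g : M → ℝ≥0∞} (hg : Measurable g) :
    ∫⁻ x, g x ^ p ∂μ
      = ∫⁻ l in Ioi (0:ℝ), ENNReal.ofReal (p * l ^ (p-1)) * μ {x | ENNReal.ofReal l < g x} := by
  have hS : MeasurableSet {q : ℝ × M | ENNReal.ofReal q.1 < g q.2} :=
    measurableSet_lt (by fun_prop) (hg.comp measurable_snd)
  have hmeas : Measurable (Function.uncurry fun (l : ℝ) (x : M) =>
      ENNReal.ofReal (p * l ^ (p-1)) *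
        ({q : ℝ × M | ENNReal.ofReal q.1 < g q.2}.indicator (fun _ => (1:ℝ≥0∞)) (l, x))) := by
    apply Measurable.mul
    · have : Measurable fun l : ℝ => ENNReal.ofReal (p * l ^ (p-1)) := by fun_prop
      exact this.comp measurable_fst
    · exact (measurable_const.indicator hS)
  calc ∫⁻ x, g x ^ p ∂μ
      = ∫⁻ x, (∫⁻ l in Ioi (0:ℝ), ENNReal.ofReal (p * l ^ (p-1)) *
          ({q : ℝ × M | ENNReal.ofReal q.1 < g q.2}.indicator (fun _ => (1:ℝ≥0∞)) (l, x))) ∂μ := by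
        refine lintegral_congr fun x => ?_
        rw [← aux_pointwise hp (g x)]
        refine setLIntegral_congr_fun measurableSet_Ioi (fun l _ => ?_)
        congr 1
      _ = ∫⁻ l in Ioi (0:ℝ), ∫⁻ x, ENNReal.ofReal (p * l ^ (p-1)) *
          ({q : ℝ × M | ENNReal.ofReal q.1 < g q.2}.indicator (fun _ => (1:ℝ≥0∞)) (l, x)) ∂μ := by
        exact (lintegral_lintegral_swap hmeas.aemeasurable).symm
      _ = _ := by
        refine setLIntegral_congr_fun measurableSet_Ioi (fun l _ => ?_)
        have h1 : ∀ x : M, ({q : ℝ × M | ENNReal.ofReal q.1 < g q.2}.indicator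
              (fun _ => (1:ℝ≥0∞)) (l, x))
            = ({x : M | ENNReal.ofReal l < g x}.indicator (fun _ => (1:ℝ≥0∞)) x) := by
          intro x
          by_cases h : ENNReal.ofReal l < g x <;> simp [Set.indicator, h]
        simp_rw [h1]
        have hm : MeasurableSet {x : M | ENNReal.ofReal l < g x} := hg measurableSet_Ioi
        rw [lintegral_const_mul _ (measurable_const.indicator hm : Measurable fun x : M =>
          ({x : M | ENNReal.ofReal l < g x}.indicator (fun _ => (1:ℝ≥0∞)) x)),
          lintegral_indicator hm, setLIntegral_one]

lemma aux_swap3 {α β γ : Type*} [MeasurableSpace α] [MeasurableSpace β] [MeasurableSpace γ]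
    (μa : Measure α) (μb : Measure β) (μc : Measure γ)
    [SFinite μa] [SFinite μb] [SFinite μc]
    (k : α → β → γ → ℝ≥0∞) (hk : Measurable (fun q : (α × β) × γ => k q.1.1 q.1.2 q.2)) :
    ∫⁻ a, ∫⁻ b, ∫⁻ c, k a b c ∂μc ∂μb ∂μa
      = ∫⁻ c, ∫⁻ b, ∫⁻ a, k a b c ∂μa ∂μb ∂μc := by
  have hk' : Measurable fun q : α × β × γ => k q.1 q.2.1 q.2.2 :=
    hk.comp ((measurable_fst.prodMk (measurable_fst.comp measurable_snd)).prodMk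
      (measurable_snd.comp measurable_snd))
  have hku : Measurable (Function.uncurry fun (a : α) (w : β × γ) => k a w.1 w.2) := hk'
  have hint : Measurable fun w : β × γ => ∫⁻ a, k a w.1 w.2 ∂μa :=
    Measurable.lintegral_prod_left hku
  calc ∫⁻ a, ∫⁻ b, ∫⁻ c, k a b c ∂μc ∂μb ∂μa
      = ∫⁻ a, ∫⁻ w, k a w.1 w.2 ∂(μb.prod μc) ∂μa := by
        refine lintegral_congr fun a => ?_
        exact (lintegral_prod _ (hk'.comp (measurable_prodMk_left)).aemeasurable).symm
      _ = ∫⁻ w, ∫⁻ a, k a w.1 w.2 ∂μa ∂(μb.prod μc) := by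
        exact lintegral_lintegral_swap (hk'.aemeasurable)
      _ = ∫⁻ b, ∫⁻ c, ∫⁻ a, k a b c ∂μa ∂μc ∂μb := by
        exact lintegral_prod _ hint.aemeasurable
      _ = ∫⁻ c, ∫⁻ b, ∫⁻ a, k a b c ∂μa ∂μb ∂μc := by
        exact lintegral_lintegral_swap hint.aemeasurable

variable {M : Type*} [MetricSpace M] [MeasurableSpace M] [BorelSpace M]
  [SecondCountableTopology M]

lemma aux_sigmaFinite (μ : Measure M)
    (hball : ∀ (x : M) (r : ℝ), 0 < r → μ (ball x r) < ⊤) : SigmaFinite μ := by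
  rcases isEmpty_or_nonempty M with hM | hM
  · exact ⟨⟨⟨fun _ => ∅, fun _ => trivial, by simp, by simp [eq_empty_of_isEmpty]⟩⟩⟩
  · obtain ⟨u, hu⟩ : ∃ u : ℕ → M, DenseRange u :=
      ⟨TopologicalSpace.denseSeq M, TopologicalSpace.denseRange_denseSeq M⟩
    refine ⟨⟨⟨fun n => ball (u n) 1, fun _ => trivial, fun n => hball _ _ one_pos, ?_⟩⟩⟩
    ext x
    simp only [mem_iUnion, mem_univ, iff_true]
    obtain ⟨n, hn⟩ := hu.exists_dist_lt x one_pos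
    exact ⟨n, by simpa [mem_ball, dist_comm] using hn⟩

lemma aux_ball_inter_meas (μ : Measure M) [SFinite μ] (S : Set M) (hS : MeasurableSet S) :
    Measurable fun q : M × ℝ => μ (S ∩ ball q.1 q.2) := by
  have hopen : MeasurableSet {q : (M × ℝ) × M | q.2 ∈ S ∧ dist q.2 q.1.1 < q.1.2} := by
    refine (measurable_snd hS).inter ?_
    exact (isOpen_lt (Continuous.dist continuous_snd (continuous_fst.fst))
      (continuous_fst.snd)).measurableSet
  have : ∀ q : M × ℝ, μ (S ∩ ball q.1 q.2)
      = ∫⁻ y, {q : (M × ℝ) × M | q.2 ∈ S ∧ dist q.2 q.1.1 < q.1.2}.indicator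
          (fun _ => 1) (q, y) ∂μ := by
    intro q
    have : ∀ y : M, {q : (M × ℝ) × M | q.2 ∈ S ∧ dist q.2 q.1.1 < q.1.2}.indicator
          (fun _ => (1:ℝ≥0∞)) (q, y) = (S ∩ ball q.1 q.2).indicator (fun _ => 1) y := by
      intro y
      have hiff : ((q, y) ∈ {q : (M × ℝ) × M | q.2 ∈ S ∧ dist q.2 q.1.1 < q.1.2})
          ↔ y ∈ S ∩ ball q.1 q.2 := by
        simp [mem_ball]
      classical
      rw [Set.indicator_apply, Set.indicator_apply]
      by_cases h : y ∈ S ∩ ball q.1 q.2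
      · rw [if_pos (hiff.mpr h), if_pos h]
      · rw [if_neg (fun hy => h (hiff.mp hy)), if_neg h]
    simp_rw [this]
    rw [lintegral_indicator (hS.inter measurableSet_ball), setLIntegral_one]
  simp_rw [this]
  exact Measurable.lintegral_prod_right' (measurable_const.indicator hopen)

lemma aux_ball_meas (μ : Measure M) [SFinite μ] :
    Measurable fun q : M × ℝ => μ (ball q.1 q.2) := by
  have := aux_ball_inter_meas μ univ MeasurableSet.univ
  simpa using this

variable {M : Type*} [MetricSpace M] [MeasurableSpace M] [BorelSpace M]
  [SecondCountableTopology M]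

lemma aux_inner_meas (μ : Measure M) [SFinite μ] (g : M → ℝ → ℝ≥0∞)
    (hg : Measurable (fun q : M × ℝ => g q.1 q.2)) (y : M) :
    Measurable fun t : ℝ => ∫⁻ x in ball y t, g x t ∂μ := by
  classical
  have hset : MeasurableSet {q : ℝ × M | dist q.2 y < q.1} :=
    (isOpen_lt (continuous_snd.dist continuous_const) continuous_fst).measurableSet
  have h1 : ∀ t : ℝ, ∫⁻ x in ball y t, g x t ∂μ
      = ∫⁻ x, {q : ℝ × M | dist q.2 y < q.1}.indicator (fun q => g q.2 q.1) (t, x) ∂μ := by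
    intro t
    rw [← lintegral_indicator measurableSet_ball]
    refine lintegral_congr fun x => ?_
    rw [Set.indicator_apply, Set.indicator_apply]
    by_cases h : x ∈ ball y t
    · rw [if_pos h, if_pos (by simpa [mem_ball, dist_comm] using h)]
    · rw [if_neg h, if_neg (by simpa [mem_ball, dist_comm] using h)]
  simp_rw [h1]
  exact Measurable.lintegral_prod_right'
    ((hg.comp (measurable_snd.prodMk measurable_fst)).indicator hset)

lemma aux_identC (μ : Measure M) [SFinite μ] (g : M → ℝ → ℝ≥0∞)
    (hg : Measurable (fun q : M × ℝ => g q.1 q.2)) (S : Set M) (hS : MeasurableSet S) :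
    ∫⁻ x, (∫⁻ t in Ioi (0:ℝ), g x t * μ (S ∩ ball x t)) ∂μ
      = ∫⁻ y in S, (∫⁻ t in Ioi (0:ℝ), ∫⁻ x in ball y t, g x t ∂μ) ∂μ := by
  classical
  set SS : Set ((M × ℝ) × M) := {q | dist q.2 q.1.1 < q.1.2} with hSS
  have hSSmeas : MeasurableSet SS :=
    (isOpen_lt (Continuous.dist continuous_snd continuous_fst.fst)
      continuous_fst.snd).measurableSet
  set k : M → ℝ → M → ℝ≥0∞ :=
    fun x t y => g x t * S.indicator (fun _ => 1) y * SS.indicator (fun _ => 1) ((x, t), y)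
    with hk_def
  have hk : Measurable (fun q : (M × ℝ) × M => k q.1.1 q.1.2 q.2) := by
    refine ((hg.comp measurable_fst).mul ?_).mul ?_
    · exact (measurable_const.indicator hS).comp measurable_snd
    · exact (measurable_const.indicator hSSmeas).comp
        ((measurable_fst.fst.prodMk measurable_fst.snd).prodMk measurable_snd)
  have hmem : ∀ (x : M) (t : ℝ) (y : M), (((x, t), y) ∈ SS) ↔ y ∈ ball x t := by
    intro x t y; simp [hSS, mem_ball]
  have step1 : ∀ (x : M) (t : ℝ), g x t * μ (S ∩ ball x t) = ∫⁻ y, k x t y ∂μ := by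
    intro x t
    have hprod : ∀ y : M, k x t y
        = g x t * ((S ∩ ball x t).indicator (fun _ => 1) y) := by
      intro y
      rw [hk_def]
      simp only
      rw [mul_assoc]
      congr 1
      rw [Set.indicator_apply, Set.indicator_apply, Set.indicator_apply]
      by_cases h1 : y ∈ S <;> by_cases h2 : ((x, t), y) ∈ SS
      · rw [if_pos h1, if_pos h2, if_pos ⟨h1, (hmem _ _ _).mp h2⟩, one_mul]
      · rw [if_pos h1, if_neg h2, if_neg (fun h => h2 ((hmem _ _ _).mpr h.2)), one_mul]
      · rw [if_neg h1, if_pos h2, if_neg (fun h => h1 h.1), zero_mul]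
      · rw [if_neg h1, if_neg h2, if_neg (fun h => h1 h.1), zero_mul]
    simp_rw [hprod]
    rw [lintegral_const_mul _ (measurable_const.indicator (hS.inter measurableSet_ball)),
      lintegral_indicator (hS.inter measurableSet_ball), setLIntegral_one]
  have step3 : ∀ y : M, (∫⁻ t in Ioi (0:ℝ), ∫⁻ x, k x t y ∂μ)
      = S.indicator (fun _ => 1) y * ∫⁻ t in Ioi (0:ℝ), ∫⁻ x in ball y t, g x t ∂μ := by
    intro y
    have hx : ∀ t : ℝ, (∫⁻ x, k x t y ∂μ)
        = S.indicator (fun _ => 1) y * ∫⁻ x in ball y t, g x t ∂μ := by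
      intro t
      have hptw : ∀ x : M, k x t y
          = S.indicator (fun _ => (1:ℝ≥0∞)) y * (ball y t).indicator (fun x => g x t) x := by
        intro x
        rw [hk_def]
        simp only
        have hmem2 : (((x, t), y) ∈ SS) ↔ x ∈ ball y t := by
          simp [hSS, mem_ball, dist_comm]
        by_cases h1 : y ∈ S <;> by_cases h2 : x ∈ ball y t <;>
          simp [Set.indicator_apply, hmem2, h1, h2, mul_comm]
      simp_rw [hptw]
      have hgt : Measurable (fun x : M => g x t) :=
        hg.comp (measurable_id.prodMk measurable_const)
      have hbm : Measurable ((ball y t).indicator (fun x : M => g x t)) :=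
        hgt.indicator measurableSet_ball
      rw [lintegral_const_mul _ hbm, lintegral_indicator measurableSet_ball]
    simp_rw [hx]
    rw [lintegral_const_mul _ (aux_inner_meas μ g hg y)]
  calc ∫⁻ x, (∫⁻ t in Ioi (0:ℝ), g x t * μ (S ∩ ball x t)) ∂μ
      = ∫⁻ x, (∫⁻ t in Ioi (0:ℝ), ∫⁻ y, k x t y ∂μ) ∂μ := by
        refine lintegral_congr fun x => setLIntegral_congr_fun measurableSet_Ioi
          (fun t _ => step1 x t)
      _ = ∫⁻ y, (∫⁻ t in Ioi (0:ℝ), ∫⁻ x, k x t y ∂μ) ∂μ :=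
        aux_swap3 μ (volume.restrict (Ioi (0:ℝ))) μ k hk
      _ = ∫⁻ y, S.indicator (fun _ => 1) y *
            (∫⁻ t in Ioi (0:ℝ), ∫⁻ x in ball y t, g x t ∂μ) ∂μ := by
        exact lintegral_congr step3
      _ = _ := by
        rw [← lintegral_indicator hS]
        refine lintegral_congr fun y => ?_
        rw [Set.indicator_apply, Set.indicator_apply]
        by_cases h : y ∈ S
        · rw [if_pos h, if_pos h, one_mul]
        · rw [if_neg h, if_neg h, zero_mul]

variable {M : Type*} [MetricSpace M] [MeasurableSpace M] [BorelSpace M]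
  [SecondCountableTopology M]

lemma aux_A2_meas (μ : Measure M) [SFinite μ] (g : M → ℝ → ℝ≥0∞)
    (hg : Measurable (fun q : M × ℝ => g q.1 q.2)) :
    Measurable fun x : M => ∫⁻ t in Ioi (0:ℝ), ∫⁻ y in ball x t, g y t ∂μ := by
  classical
  set SS : Set ((M × ℝ) × M) := {q | dist q.2 q.1.1 < q.1.2} with hSS
  have hSSmeas : MeasurableSet SS :=
    (isOpen_lt (Continuous.dist continuous_snd continuous_fst.fst)
      continuous_fst.snd).measurableSet
  have h1 : ∀ (x : M) (t : ℝ), ∫⁻ y in ball x t, g y t ∂μ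
      = ∫⁻ y, SS.indicator (fun q => g q.2 q.1.2) ((x, t), y) ∂μ := by
    intro x t
    rw [← lintegral_indicator measurableSet_ball]
    refine lintegral_congr fun y => ?_
    rw [Set.indicator_apply, Set.indicator_apply]
    have : (((x, t), y) ∈ SS) ↔ y ∈ ball x t := by simp [hSS, mem_ball]
    by_cases h : y ∈ ball x t
    · rw [if_pos h, if_pos (this.mpr h)]
    · rw [if_neg h, if_neg (fun hh => h (this.mp hh))]
  have hf : Measurable fun w : M × ℝ => ∫⁻ y, SS.indicator (fun q => g q.2 q.1.2) (w, y) ∂μ :=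
    Measurable.lintegral_prod_right'
      ((hg.comp (measurable_snd.prodMk measurable_fst.snd)).indicator hSSmeas)
  have h2 : (fun x : M => ∫⁻ t in Ioi (0:ℝ), ∫⁻ y in ball x t, g y t ∂μ)
      = fun x : M => ∫⁻ t in Ioi (0:ℝ),
        (fun w : M × ℝ => ∫⁻ y, SS.indicator (fun q => g q.2 q.1.2) (w, y) ∂μ) (x, t) := by
    ext x
    exact setLIntegral_congr_fun measurableSet_Ioi
      (fun t _ => h1 x t)
  rw [h2]
  exact Measurable.lintegral_prod_right' (f := fun q : M × ℝ => _) hf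

variable {M : Type*} [MetricSpace M] [MeasurableSpace M] [BorelSpace M]
  [SecondCountableTopology M]

lemma aux_maximal (μ : Measure M) [SigmaFinite μ]
    (hball : ∀ (x : M) (r : ℝ), 0 < r → 0 < μ (ball x r) ∧ μ (ball x r) < ⊤)
    (C₀ N : ℝ) (hC₀ : 1 ≤ C₀) (hN : 0 < N)
    (hD : ∀ (x : M) (r l : ℝ), 0 < r → 1 ≤ l →
      μ (ball x (l * r)) ≤ ENNReal.ofReal (C₀ * l ^ N) * μ (ball x r))
    (S : Set M) (hS : MeasurableSet S) :
    μ {x : M | ∃ q : ℚ, 0 < (q:ℝ) ∧ μ (ball x (q:ℝ)) < 2 * μ (S ∩ ball x (q:ℝ))}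
      ≤ ENNReal.ofReal (2 * (C₀ * 5 ^ N)) * μ S := by
  classical
  set On : ℕ → Set M := fun n =>
    {x : M | ∃ q : ℚ, 0 < (q:ℝ) ∧ (q:ℝ) ≤ n + 1 ∧
      μ (ball x (q:ℝ)) < 2 * μ (S ∩ ball x (q:ℝ))} with hOn
  have hO_union : {x : M | ∃ q : ℚ, 0 < (q:ℝ) ∧ μ (ball x (q:ℝ)) < 2 * μ (S ∩ ball x (q:ℝ))}
      = ⋃ n, On n := by
    ext x
    simp only [mem_setOf_eq, mem_iUnion, hOn]
    constructor
    · rintro ⟨q, hq0, hq⟩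
      refine ⟨⌈(q:ℝ)⌉₊, q, hq0, ?_, hq⟩
      have := Nat.le_ceil (q:ℝ)
      linarith
    · rintro ⟨n, q, hq0, _, hq⟩
      exact ⟨q, hq0, hq⟩
  have hOn_mono : Monotone On := by
    intro m n hmn x hx
    obtain ⟨q, h1, h2, h3⟩ := hx
    refine ⟨q, h1, h2.trans ?_, h3⟩
    have : (m:ℝ) ≤ (n:ℝ) := Nat.cast_le.mpr hmn
    linarith
  have key : ∀ n, μ (On n) ≤ ENNReal.ofReal (2 * (C₀ * 5 ^ N)) * μ S := by
    intro n
    set P : M → ℚ → Prop := fun x q => 0 < (q:ℝ) ∧ (q:ℝ) ≤ n + 1 ∧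
      μ (ball x (q:ℝ)) < 2 * μ (S ∩ ball x (q:ℝ)) with hP
    set r : M → ℝ := fun x => if h : ∃ q : ℚ, P x q then ((h.choose : ℚ) : ℝ) else 1 with hr
    have hr1 : ∀ x ∈ On n, 0 < r x ∧ r x ≤ n + 1 ∧
        μ (ball x (r x)) < 2 * μ (S ∩ ball x (r x)) := by
      intro x hx
      have hex : ∃ q : ℚ, P x q := hx
      rw [hr]
      simp only [dif_pos hex]
      exact hex.choose_spec
    obtain ⟨u, hu_sub, hu_disj, hu_cov⟩ :=
      Vitali.exists_disjoint_subfamily_covering_enlargement_closedBall (On n) id r (n + 1)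
        (fun a ha => (hr1 a ha).2.1) 4 (by norm_num)
    have hu_pos : ∀ b ∈ u, 0 < r b := fun b hb => (hr1 b (hu_sub hb)).1
    -- countability of u
    have hcount : u.Countable := by
      have h := MeasureTheory.Measure.countable_meas_pos_of_disjoint_iUnion₀
        (μ := μ) (As := fun b : u => closedBall (b : M) (r b))
        (fun b => measurableSet_closedBall.nullMeasurableSet)
        (fun i j hij => Disjoint.aedisjoint
          (hu_disj i.2 j.2 (fun h => hij (Subtype.ext h))))
      have huniv : (univ : Set u) ⊆ {i : u | 0 < μ (closedBall (i : M) (r i))} := by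
        intro b _
        exact lt_of_lt_of_le (hball (b : M) (r b) (hu_pos b b.2)).1
          (measure_mono ball_subset_closedBall)
      rw [← Set.countable_coe_iff]
      exact (h.mono huniv).to_subtype.of_equiv _ (Equiv.Set.univ _)
    -- cover
    have hcover : On n ⊆ ⋃ b ∈ u, ball b (5 * r b) := by
      intro a ha
      obtain ⟨b, hb, hsub⟩ := hu_cov a ha
      refine mem_biUnion hb ?_
      have h1 : a ∈ closedBall (id a) (r a) := mem_closedBall_self (hr1 a ha).1.le
      have h2 := hsub h1
      exact closedBall_subset_ball (by linarith [hu_pos b hb]) h2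
    calc μ (On n) ≤ μ (⋃ b ∈ u, ball b (5 * r b)) := measure_mono hcover
      _ ≤ ∑' b : u, μ (ball (b : M) (5 * r b)) := measure_biUnion_le μ hcount _
      _ ≤ ∑' b : u, ENNReal.ofReal (C₀ * 5 ^ N) * (2 * μ (S ∩ closedBall (b : M) (r b))) := by
        refine ENNReal.tsum_le_tsum fun b => ?_
        have hb := hu_pos b b.2
        have hd := hD (b : M) (r b) 5 hb (by norm_num)
        have hlt := (hr1 b (hu_sub b.2)).2.2
        calc μ (ball (b : M) (5 * r b)) ≤ ENNReal.ofReal (C₀ * 5 ^ N) * μ (ball (b : M) (r b)) := hd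
          _ ≤ ENNReal.ofReal (C₀ * 5 ^ N) * (2 * μ (S ∩ ball (b : M) (r b))) :=
            mul_le_mul_right hlt.le _
          _ ≤ _ := by
            refine mul_le_mul_right (mul_le_mul_right (measure_mono ?_) _) _
            exact inter_subset_inter_right _ ball_subset_closedBall
      _ = (ENNReal.ofReal (C₀ * 5 ^ N) * 2) * ∑' b : u, μ (S ∩ closedBall (b : M) (r b)) := by
        rw [← ENNReal.tsum_mul_left]
        congr 1
        ext b
        ring
      _ ≤ (ENNReal.ofReal (C₀ * 5 ^ N) * 2) * μ S := by
        refine mul_le_mul_right ?_ _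
        have heq : ∑' b : u, μ (S ∩ closedBall (b : M) (r b))
            = μ (⋃ b ∈ u, S ∩ closedBall (b : M) (r b)) := by
          refine (measure_biUnion (f := fun b => S ∩ closedBall b (r b)) hcount ?_ ?_).symm
          · exact hu_disj.mono_on (fun b _ => inter_subset_right)
          · exact fun b _ => hS.inter measurableSet_closedBall
        rw [heq]
        exact measure_mono (iUnion₂_subset fun b _ => inter_subset_left)
      _ = ENNReal.ofReal (2 * (C₀ * 5 ^ N)) * μ S := by
        congr 1
        rw [mul_comm (ENNReal.ofReal _) 2, ← ENNReal.ofReal_ofNat 2, ← ENNReal.ofReal_mul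
          (by norm_num)]
    
  rw [hO_union, (hOn_mono.directed_le).measure_iUnion]
  exact iSup_le key

variable {M : Type*} [MetricSpace M] [MeasurableSpace M] [BorelSpace M]
  [SecondCountableTopology M]

lemma aux_density (μ : Measure M)
    (hball : ∀ (x : M) (r : ℝ), 0 < r → 0 < μ (ball x r) ∧ μ (ball x r) < ⊤)
    (S : Set M) (hS : MeasurableSet S) (x : M)
    (hx : x ∉ {x : M | ∃ q : ℚ, 0 < (q:ℝ) ∧ μ (ball x (q:ℝ)) < 2 * μ (S ∩ ball x (q:ℝ))})
    (t : ℝ) (ht : 0 < t) :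
    μ (ball x t) ≤ 2 * μ (ball x t \ S) := by
  have h1 : ∀ q : ℚ, 0 < (q:ℝ) → 2 * μ (S ∩ ball x (q:ℝ)) ≤ μ (ball x (q:ℝ)) := by
    intro q hq
    by_contra hcon
    exact hx ⟨q, hq, not_le.mp hcon⟩
  -- rational approximation of the ball from inside
  have h2 : 2 * μ (S ∩ ball x t) ≤ μ (ball x t) := by
    have hcover : S ∩ ball x t
        = ⋃ q : {q : ℚ // 0 < (q:ℝ) ∧ (q:ℝ) < t}, S ∩ ball x ((q:ℚ):ℝ) := by
      ext y
      simp only [mem_inter_iff, mem_iUnion, mem_ball]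
      constructor
      · rintro ⟨hyS, hyb⟩
        obtain ⟨q, hq1, hq2⟩ := exists_rat_btwn hyb
        exact ⟨⟨q, lt_of_le_of_lt dist_nonneg hq1, hq2⟩, hyS, hq1⟩
      · rintro ⟨q, hyS, hyq⟩
        exact ⟨hyS, hyq.trans q.2.2⟩
    have hdir : Directed (· ⊆ ·) (fun q : {q : ℚ // 0 < (q:ℝ) ∧ (q:ℝ) < t} =>
        S ∩ ball x ((q:ℚ):ℝ)) := by
      intro q1 q2
      rcases le_total (q1:ℚ) (q2:ℚ) with h | h
      · exact ⟨q2, inter_subset_inter_right _ (ball_subset_ball (by exact_mod_cast h)),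
          subset_rfl⟩
      · exact ⟨q1, subset_rfl,
          inter_subset_inter_right _ (ball_subset_ball (by exact_mod_cast h))⟩
    rw [hcover, hdir.measure_iUnion, ENNReal.mul_iSup]
    refine iSup_le fun q => ?_
    exact (h1 q q.2.1).trans (measure_mono (ball_subset_ball q.2.2.le))
  have hfin : μ (ball x t ∩ S) ≠ ⊤ :=
    (lt_of_le_of_lt (measure_mono inter_subset_left) (hball x t ht).2).ne
  have hsplit : μ (ball x t ∩ S) + μ (ball x t \ S) = μ (ball x t) :=
    measure_inter_add_diff _ hS
  have hle : μ (ball x t ∩ S) ≤ μ (ball x t \ S) := by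
    have h3 : μ (ball x t ∩ S) + μ (ball x t ∩ S) ≤ μ (ball x t ∩ S) + μ (ball x t \ S) := by
      rw [hsplit, ← two_mul, inter_comm]
      exact h2
    exact (ENNReal.add_le_add_iff_left hfin).mp h3
  calc μ (ball x t) = μ (ball x t ∩ S) + μ (ball x t \ S) := hsplit.symm
    _ ≤ μ (ball x t \ S) + μ (ball x t \ S) := add_le_add_left hle _
    _ = 2 * μ (ball x t \ S) := (two_mul _).symm

lemma aux_term2 {p : ℝ} (hp0 : 0 < p) (hp2 : p < 2) (a2 : ℝ≥0∞) :
    a2 * (∫⁻ l in Ioi (0:ℝ), ENNReal.ofReal (p * l ^ (p-1)) * ((ENNReal.ofReal l) ^ 2)⁻¹ *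
        ({l : ℝ | a2 ^ ((1:ℝ)/2) ≤ ENNReal.ofReal l}.indicator (fun _ => 1) l))
      ≤ ENNReal.ofReal (p / (2-p)) * (a2 ^ ((1:ℝ)/2)) ^ p := by
  classical
  rcases eq_or_ne a2 0 with rfl | ha0
  · simp
  rcases eq_or_ne a2 ⊤ with rfl | hatop
  · have hind : ∀ l : ℝ, ({l : ℝ | (⊤:ℝ≥0∞) ^ ((1:ℝ)/2) ≤ ENNReal.ofReal l}.indicator
        (fun _ => (1:ℝ≥0∞)) l) = 0 := by
      intro l
      have htop : (⊤:ℝ≥0∞) ^ ((1:ℝ)/2) = ⊤ := ENNReal.top_rpow_of_pos (by norm_num)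
      rw [Set.indicator_apply, if_neg (by simp [htop, top_le_iff, ENNReal.ofReal_ne_top])]
    simp only [hind, mul_zero]
    simp
  -- now 0 < a2 < ⊤
  set a : ℝ≥0∞ := a2 ^ ((1:ℝ)/2) with ha_def
  have ha_ne_top : a ≠ ⊤ := by
    rw [ha_def]
    exact (ENNReal.rpow_lt_top_of_nonneg (by norm_num) hatop).ne
  have ha_ne_zero : a ≠ 0 := by
    rw [ha_def]
    simp [ENNReal.rpow_eq_zero_iff, ha0, hatop]
  set a' : ℝ := a.toReal with ha'_def
  have ha'pos : 0 < a' := ENNReal.toReal_pos ha_ne_zero ha_ne_top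
  have h_ofReal_a : ENNReal.ofReal a' = a := ENNReal.ofReal_toReal ha_ne_top
  -- rewrite the integrand as an indicator of Ici a'
  have hptw : ∀ l ∈ Ioi (0:ℝ), ENNReal.ofReal (p * l ^ (p-1)) * ((ENNReal.ofReal l) ^ 2)⁻¹ *
      ({l : ℝ | a ≤ ENNReal.ofReal l}.indicator (fun _ => 1) l)
      = (Ici a').indicator (fun l => ENNReal.ofReal p * ENNReal.ofReal (l ^ (p-3))) l := by
    intro l hl
    have hl0 : (0:ℝ) < l := hl
    have hval : ENNReal.ofReal (p * l ^ (p-1)) * ((ENNReal.ofReal l) ^ 2)⁻¹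
        = ENNReal.ofReal p * ENNReal.ofReal (l ^ (p-3)) := by
      rw [← ENNReal.ofReal_pow hl0.le, ← ENNReal.ofReal_inv_of_pos (by positivity),
        ← ENNReal.ofReal_mul (by positivity), ← ENNReal.ofReal_mul hp0.le]
      congr 1
      have hexp : p - 1 + -(((2:ℕ)):ℝ) = p - 3 := by push_cast; ring
      rw [← Real.rpow_natCast l 2, ← Real.rpow_neg hl0.le, mul_assoc, ← Real.rpow_add hl0, hexp]
    have hcond : (a ≤ ENNReal.ofReal l) ↔ a' ≤ l := by
      rw [← h_ofReal_a, ENNReal.ofReal_le_ofReal_iff hl0.le]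
    rw [Set.indicator_apply, Set.indicator_apply]
    by_cases h : a' ≤ l
    · rw [if_pos (show l ∈ {l : ℝ | a ≤ ENNReal.ofReal l} from hcond.mpr h),
        if_pos (show l ∈ Ici a' from h), hval, mul_one]
    · rw [if_neg (show ¬ (l ∈ {l : ℝ | a ≤ ENNReal.ofReal l}) from fun hh => h (hcond.mp hh)),
        if_neg (show ¬ (l ∈ Ici a') from fun hh => h hh), mul_zero]
  have hInt : ∫⁻ l in Ioi (0:ℝ), ENNReal.ofReal (p * l ^ (p-1)) * ((ENNReal.ofReal l) ^ 2)⁻¹ *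
      ({l : ℝ | a ≤ ENNReal.ofReal l}.indicator (fun _ => 1) l)
      = ENNReal.ofReal p * ENNReal.ofReal (a' ^ (p-2) / (2-p)) := by
    rw [setLIntegral_congr_fun measurableSet_Ioi hptw]
    rw [lintegral_indicator measurableSet_Ici, Measure.restrict_restrict measurableSet_Ici]
    have hinter : Ici a' ∩ Ioi (0:ℝ) = Ici a' := by
      ext l; simp only [mem_inter_iff, mem_Ici, mem_Ioi]
      exact ⟨fun h => h.1, fun h => ⟨h, lt_of_lt_of_le ha'pos h⟩⟩
    rw [hinter]
    have hIci : (volume.restrict (Ici a')) = (volume.restrict (Ioi a')) :=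
      (Measure.restrict_congr_set Ioi_ae_eq_Ici).symm
    rw [hIci, lintegral_const_mul _ (by fun_prop), aux_Ioi (by linarith) ha'pos]
    congr 2
    rw [show p - 3 + 1 = p - 2 by ring]
    rw [div_eq_div_iff (by linarith) (by linarith)]
    ring
  rw [hInt]
  -- a2 = ofReal (a' ^ 2)
  have ha2eq : a2 = ENNReal.ofReal (a' ^ (2:ℝ)) := by
    have h1 : a2 = a ^ (2:ℝ) := by
      rw [ha_def, ← ENNReal.rpow_mul]
      norm_num
    rw [h1, ← h_ofReal_a, ← ENNReal.ofReal_rpow_of_pos ha'pos]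
  have hApow : a ^ p = ENNReal.ofReal (a' ^ p) := by
    rw [← h_ofReal_a, ← ENNReal.ofReal_rpow_of_pos ha'pos]
  have h2 : a' ^ (2:ℝ) * a' ^ (p-2) = a' ^ p := by
    rw [← Real.rpow_add ha'pos]; norm_num
  have hreal : a' ^ (2:ℝ) * (p * (a' ^ (p-2) / (2-p))) = p / (2-p) * a' ^ p := by
    rw [← h2]; ring
  rw [ha2eq, hApow, ← ENNReal.ofReal_mul hp0.le,
    ← ENNReal.ofReal_mul (Real.rpow_nonneg ha'pos.le _), hreal,
    ENNReal.ofReal_mul (div_nonneg hp0.le (by linarith))]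

end AuxLemmas

/-- Let `p ∈ (0,2]`. If `(M,d,μ)` satisfies (D') with constants
`C₀ ≥ 1` and `N > 0`, then there is a constant `C`, depending only on `p`, `C₀`, `N`,
such that for every measurable `F : M × (0,∞) → [0,∞]` one has
`‖Ṽ(F)‖_{L^p(μ)} ≤ C ‖A(F)‖_{L^p(μ)}`. -/
theorem stmt_1
    {M : Type*} [MetricSpace M] [MeasurableSpace M] [BorelSpace M]
    [SecondCountableTopology M]
    (μ : Measure M)
    (hball : ∀ (x : M) (r : ℝ), 0 < r → 0 < μ (ball x r) ∧ μ (ball x r) < ⊤)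
    (C₀ N : ℝ) (hC₀ : 1 ≤ C₀) (hN : 0 < N)
    (hD : ∀ (x : M) (r l : ℝ), 0 < r → 1 ≤ l →
      μ (ball x (l * r)) ≤ ENNReal.ofReal (C₀ * l ^ N) * μ (ball x r))
    (p : ℝ) (hp0 : 0 < p) (hp2 : p ≤ 2) :
    ∃ C : ℝ, 0 < C ∧
      ∀ F : M → ℝ → ℝ≥0∞, Measurable (Function.uncurry F) →
        (∫⁻ x, ((∫⁻ t in Ioi (0:ℝ),
              (F x t) ^ 2 / ENNReal.ofReal t) ^ ((1:ℝ)/2)) ^ p ∂μ) ^ (1/p)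
          ≤ ENNReal.ofReal C *
            (∫⁻ x, ((∫⁻ t in Ioi (0:ℝ), ∫⁻ y in ball x t,
              (F y t) ^ 2 / (ENNReal.ofReal t * μ (ball y t)) ∂μ) ^ ((1:ℝ)/2)) ^ p ∂μ)
            ^ (1/p) := by
  haveI hSF : SigmaFinite μ := aux_sigmaFinite μ (fun x r hr => (hball x r hr).2)
  have h5N : (0:ℝ) < 5 ^ N := Real.rpow_pos_of_pos (by norm_num) N
  rcases lt_or_eq_of_le hp2 with hplt | hpeq
  · -- case p < 2
    set Kc : ℝ := 2 * (C₀ * 5 ^ N) with hKc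
    have hKpos : 0 < Kc := by nlinarith
    set Creal : ℝ := Kc + 2 * (p / (2 - p)) with hCrealdef
    have hdivpos : 0 < p / (2 - p) := div_pos hp0 (by linarith)
    have hCpos : 0 < Creal := by rw [hCrealdef]; linarith
    refine ⟨Creal ^ (1/p), Real.rpow_pos_of_pos hCpos _, ?_⟩
    intro F hF
    -- basic definitions
    set g : M → ℝ → ℝ≥0∞ := fun y t => F y t ^ 2 / (ENNReal.ofReal t * μ (ball y t))
      with hgdef
    have hgm : Measurable fun q : M × ℝ => g q.1 q.2 := by
      refine Measurable.div ?_ ?_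
      · exact hF.pow_const 2
      · exact (ENNReal.measurable_ofReal.comp measurable_snd).mul (aux_ball_meas μ)
    set W : M → ℝ≥0∞ := fun x => ∫⁻ t in Ioi (0:ℝ), F x t ^ 2 / ENNReal.ofReal t with hWdef
    have hWm : Measurable W := by
      refine Measurable.lintegral_prod_right'
        (f := fun q : M × ℝ => F q.1 q.2 ^ 2 / ENNReal.ofReal q.2) ?_
      exact (hF.pow_const 2).div (ENNReal.measurable_ofReal.comp measurable_snd)
    set A2 : M → ℝ≥0∞ := fun x => ∫⁻ t in Ioi (0:ℝ), ∫⁻ y in ball x t, g y t ∂μ with hA2def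
    have hA2m : Measurable A2 := aux_A2_meas μ g hgm
    set V : M → ℝ≥0∞ := fun x => W x ^ ((1:ℝ)/2) with hVdef
    set A : M → ℝ≥0∞ := fun x => A2 x ^ ((1:ℝ)/2) with hAdef
    have hVm : Measurable V := hWm.pow_const _
    have hAm : Measurable A := hA2m.pow_const _
    set G : ℝ → Set M := fun l => {y | ENNReal.ofReal l < A y} with hGdef
    have hGm : ∀ l, MeasurableSet (G l) := fun l => measurableSet_lt measurable_const hAm
    have hGcm : ∀ l, MeasurableSet (G l)ᶜ := fun l => (hGm l).compl
    set Ol : ℝ → Set M := fun l =>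
      {x : M | ∃ q : ℚ, 0 < (q:ℝ) ∧ μ (ball x (q:ℝ)) < 2 * μ (G l ∩ ball x (q:ℝ))} with hOldef
    set H : ℝ → ℝ≥0∞ := fun l => ∫⁻ y in {y | A y ≤ ENNReal.ofReal l}, A2 y ∂μ with hHdef
    set c : ℝ → ℝ≥0∞ := fun l => ENNReal.ofReal (p * l ^ (p-1)) with hcdef
    have hcm : Measurable c := by
      refine ENNReal.measurable_ofReal.comp (measurable_const.mul ?_)
      exact measurable_id.pow_const (p-1)
    have hGc : ∀ l, (G l)ᶜ = {y | A y ≤ ENNReal.ofReal l} := by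
      intro l
      ext y
      simp [hGdef, not_lt]
    -- algebraic identity
    have halg : ∀ (x : M) (t : ℝ), 0 < t → g x t * μ (ball x t)
        = F x t ^ 2 / ENNReal.ofReal t := by
      intro x t ht
      have hm0 : μ (ball x t) ≠ 0 := (hball x t ht).1.ne'
      have hmt : μ (ball x t) ≠ ⊤ := (hball x t ht).2.ne
      have hc0 : ENNReal.ofReal t ≠ 0 := (ENNReal.ofReal_pos.mpr ht).ne'
      have hct : ENNReal.ofReal t ≠ ⊤ := ENNReal.ofReal_ne_top
      rw [hgdef]
      simp only
      rw [div_eq_mul_inv, div_eq_mul_inv, ENNReal.mul_inv (Or.inl hc0) (Or.inl hct),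
        mul_assoc, mul_assoc, ENNReal.inv_mul_cancel hm0 hmt, mul_one]
    -- Lemma B
    have lemB : ∀ l : ℝ, ∫⁻ x in (Ol l)ᶜ, W x ∂μ ≤ 2 * H l := by
      intro l
      set B : M → ℝ≥0∞ := fun x => ∫⁻ t in Ioi (0:ℝ), 2 * (g x t * μ ((G l)ᶜ ∩ ball x t))
        with hBdef
      have hBm : Measurable B := by
        refine Measurable.lintegral_prod_right'
          (f := fun q : M × ℝ => 2 * (g q.1 q.2 * μ ((G l)ᶜ ∩ ball q.1 q.2))) ?_
        exact measurable_const.mul (hgm.mul (aux_ball_inter_meas μ (G l)ᶜ (hGcm l)))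
      have hWB : ∀ x ∈ (Ol l)ᶜ, W x ≤ B x := by
        intro x hx
        rw [hWdef, hBdef]
        simp only
        refine setLIntegral_mono ?_ ?_
        · refine measurable_const.mul (Measurable.mul ?_ ?_)
          · exact hgm.comp (measurable_const.prodMk measurable_id)
          · exact (aux_ball_inter_meas μ (G l)ᶜ (hGcm l)).comp
              (measurable_const.prodMk measurable_id)
        · intro t ht
          have ht0 : 0 < t := ht
          have hdens := aux_density μ hball (G l) (hGm l) x hx t ht0
          have hdiff : ball x t \ G l = (G l)ᶜ ∩ ball x t := by
            rw [diff_eq, inter_comm]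
          rw [hdiff] at hdens
          calc F x t ^ 2 / ENNReal.ofReal t = g x t * μ (ball x t) := (halg x t ht0).symm
            _ ≤ g x t * (2 * μ ((G l)ᶜ ∩ ball x t)) := mul_le_mul_right hdens _
            _ = 2 * (g x t * μ ((G l)ᶜ ∩ ball x t)) := by ring
      calc ∫⁻ x in (Ol l)ᶜ, W x ∂μ ≤ ∫⁻ x in (Ol l)ᶜ, B x ∂μ := setLIntegral_mono hBm hWB
        _ ≤ ∫⁻ x, B x ∂μ := setLIntegral_le_lintegral _ _
        _ = 2 * ∫⁻ x, (∫⁻ t in Ioi (0:ℝ), g x t * μ ((G l)ᶜ ∩ ball x t)) ∂μ := by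
            rw [← lintegral_const_mul' 2 _ ENNReal.ofNat_ne_top]
            refine lintegral_congr fun x => ?_
            rw [hBdef]
            simp only
            rw [← lintegral_const_mul' 2 _ ENNReal.ofNat_ne_top]
        _ = 2 * ∫⁻ y in (G l)ᶜ, A2 y ∂μ := by
            rw [aux_identC μ g hgm ((G l)ᶜ) (hGcm l)]
        _ = 2 * H l := by rw [hGc l, hHdef]
    -- the key distributional inequality
    have chainkey : ∀ l ∈ Ioi (0:ℝ), μ {x | ENNReal.ofReal l < V x}
        ≤ ENNReal.ofReal Kc * μ (G l) + ((ENNReal.ofReal l) ^ 2)⁻¹ * (2 * H l) := by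
      intro l hl
      have hl0 : (0:ℝ) < l := hl
      have hVset : MeasurableSet {x : M | ENNReal.ofReal l < V x} :=
        measurableSet_lt measurable_const hVm
      have hsub : {x : M | ENNReal.ofReal l < V x}
          ⊆ Ol l ∪ ({x | ENNReal.ofReal l < V x} ∩ (Ol l)ᶜ) := by
        intro x hx
        by_cases h : x ∈ Ol l
        · exact Or.inl h
        · exact Or.inr ⟨hx, h⟩
      have hmax : μ (Ol l) ≤ ENNReal.ofReal Kc * μ (G l) :=
        aux_maximal μ hball C₀ N hC₀ hN hD (G l) (hGm l)
      -- Chebyshev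
      set ε : ℝ≥0∞ := (ENNReal.ofReal l) ^ 2 with hεdef
      have hε0 : ε ≠ 0 := pow_ne_zero _ (ENNReal.ofReal_pos.mpr hl0).ne'
      have hεt : ε ≠ ⊤ := ENNReal.pow_ne_top ENNReal.ofReal_ne_top
      have hsub2 : {x : M | ENNReal.ofReal l < V x} ⊆ {x | ε ≤ W x} := by
        intro x hx
        have h1 : (ENNReal.ofReal l) ^ 2 ≤ (V x) ^ 2 := pow_le_pow_left' (le_of_lt hx) 2
        have h2 : (V x) ^ 2 = W x := by
          rw [hVdef]
          simp only
          rw [← ENNReal.rpow_natCast (W x ^ ((1:ℝ)/2)) 2, ← ENNReal.rpow_mul]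
          norm_num
        simp only [mem_setOf_eq, hεdef]
        rw [← h2]
        exact h1
      have cheb : μ ({x | ENNReal.ofReal l < V x} ∩ (Ol l)ᶜ)
          ≤ ε⁻¹ * ∫⁻ x in (Ol l)ᶜ, W x ∂μ := by
        have h3 : μ ({x | ENNReal.ofReal l < V x} ∩ (Ol l)ᶜ)
            = μ.restrict ((Ol l)ᶜ) {x | ENNReal.ofReal l < V x} :=
          (Measure.restrict_apply hVset).symm
        rw [h3]
        calc μ.restrict ((Ol l)ᶜ) {x | ENNReal.ofReal l < V x}
            ≤ μ.restrict ((Ol l)ᶜ) {x | ε ≤ W x} := measure_mono hsub2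
          _ = ε⁻¹ * (ε * μ.restrict ((Ol l)ᶜ) {x | ε ≤ W x}) := by
              rw [← mul_assoc, ENNReal.inv_mul_cancel hε0 hεt, one_mul]
          _ ≤ ε⁻¹ * ∫⁻ x, W x ∂(μ.restrict ((Ol l)ᶜ)) :=
              mul_le_mul_right (mul_meas_ge_le_lintegral₀ hWm.aemeasurable ε) _
      calc μ {x | ENNReal.ofReal l < V x}
          ≤ μ (Ol l ∪ ({x | ENNReal.ofReal l < V x} ∩ (Ol l)ᶜ)) := measure_mono hsub
        _ ≤ μ (Ol l) + μ ({x | ENNReal.ofReal l < V x} ∩ (Ol l)ᶜ) := measure_union_le _ _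
        _ ≤ ENNReal.ofReal Kc * μ (G l) + ε⁻¹ * ∫⁻ x in (Ol l)ᶜ, W x ∂μ :=
            add_le_add hmax cheb
        _ ≤ ENNReal.ofReal Kc * μ (G l) + ε⁻¹ * (2 * H l) :=
            add_le_add le_rfl (mul_le_mul_right (lemB l) _)
    -- main estimate
    have hmain : ∫⁻ x, V x ^ p ∂μ ≤ ENNReal.ofReal Creal * ∫⁻ x, A x ^ p ∂μ := by
      have hL : ∫⁻ x, V x ^ p ∂μ
          = ∫⁻ l in Ioi (0:ℝ), c l * μ {x | ENNReal.ofReal l < V x} :=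
        aux_layercake μ hp0 hVm
      have hLA : ∫⁻ l in Ioi (0:ℝ), c l * μ (G l) = ∫⁻ x, A x ^ p ∂μ :=
        (aux_layercake μ hp0 hAm).symm
      have hmono : ∫⁻ l in Ioi (0:ℝ), c l * μ {x | ENNReal.ofReal l < V x}
          ≤ ∫⁻ l in Ioi (0:ℝ), (c l * (ENNReal.ofReal Kc * μ (G l))
            + c l * (((ENNReal.ofReal l) ^ 2)⁻¹ * (2 * H l))) := by
        refine lintegral_mono_ae ?_
        filter_upwards [self_mem_ae_restrict measurableSet_Ioi] with l hl
        calc c l * μ {x | ENNReal.ofReal l < V x}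
            ≤ c l * (ENNReal.ofReal Kc * μ (G l) + ((ENNReal.ofReal l) ^ 2)⁻¹ * (2 * H l)) :=
              mul_le_mul_right (chainkey l hl) _
          _ = _ := mul_add _ _ _
      have hGanti : Antitone fun l : ℝ => μ (G l) := by
        intro l1 l2 h12
        refine measure_mono fun y hy => ?_
        exact lt_of_le_of_lt (ENNReal.ofReal_le_ofReal h12) hy
      have hT1m : Measurable fun l : ℝ => c l * (ENNReal.ofReal Kc * μ (G l)) :=
        hcm.mul (measurable_const.mul hGanti.measurable)
      have hT1 : ∫⁻ l in Ioi (0:ℝ), c l * (ENNReal.ofReal Kc * μ (G l))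
          = ENNReal.ofReal Kc * ∫⁻ x, A x ^ p ∂μ := by
        calc ∫⁻ l in Ioi (0:ℝ), c l * (ENNReal.ofReal Kc * μ (G l))
            = ∫⁻ l in Ioi (0:ℝ), ENNReal.ofReal Kc * (c l * μ (G l)) := by
              refine lintegral_congr fun l => by ring
          _ = ENNReal.ofReal Kc * ∫⁻ l in Ioi (0:ℝ), c l * μ (G l) :=
              lintegral_const_mul' _ _ ENNReal.ofReal_ne_top
          _ = _ := by rw [hLA]
      -- T2
      have hT2 : ∫⁻ l in Ioi (0:ℝ), c l * (((ENNReal.ofReal l) ^ 2)⁻¹ * (2 * H l))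
          ≤ ENNReal.ofReal (2 * (p / (2-p))) * ∫⁻ x, A x ^ p ∂μ := by
        set SA : Set (ℝ × M) := {q | A q.2 ≤ ENNReal.ofReal q.1} with hSAdef
        have hSAm : MeasurableSet SA :=
          measurableSet_le (hAm.comp measurable_snd)
            (ENNReal.measurable_ofReal.comp measurable_fst)
        have hslice : ∀ y : M, MeasurableSet {l : ℝ | A2 y ^ ((1:ℝ)/2) ≤ ENNReal.ofReal l} :=
          fun y => measurableSet_le measurable_const ENNReal.measurable_ofReal
        have hinvm : Measurable fun l : ℝ => ((ENNReal.ofReal l) ^ 2)⁻¹ :=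
          ((ENNReal.measurable_ofReal.pow_const 2)).inv
        have step0 : ∀ l : ℝ, H l = ∫⁻ y, SA.indicator (fun _ => (1:ℝ≥0∞)) (l, y) * A2 y ∂μ := by
          intro l
          rw [hHdef]
          simp only
          rw [← lintegral_indicator (measurableSet_le hAm measurable_const)]
          refine lintegral_congr fun y => ?_
          rw [Set.indicator_apply, Set.indicator_apply]
          by_cases h : A y ≤ ENNReal.ofReal l
          · rw [if_pos (show y ∈ {y : M | A y ≤ ENNReal.ofReal l} from h),
              if_pos (show (l, y) ∈ SA from h), one_mul]
          · rw [if_neg (show y ∉ {y : M | A y ≤ ENNReal.ofReal l} from h),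
              if_neg (show (l, y) ∉ SA from h), zero_mul]
        have hum : Measurable fun q : ℝ × M =>
            (c q.1 * ((ENNReal.ofReal q.1) ^ 2)⁻¹ * SA.indicator (fun _ => (1:ℝ≥0∞)) q)
              * A2 q.2 := by
          refine Measurable.mul ?_ (hA2m.comp measurable_snd)
          exact ((hcm.comp measurable_fst).mul (hinvm.comp measurable_fst)).mul
            (measurable_const.indicator hSAm)
        have step1 : ∫⁻ l in Ioi (0:ℝ), c l * (((ENNReal.ofReal l) ^ 2)⁻¹ * (2 * H l))
            = 2 * ∫⁻ l in Ioi (0:ℝ), ∫⁻ y,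
              (c l * ((ENNReal.ofReal l) ^ 2)⁻¹ * SA.indicator (fun _ => (1:ℝ≥0∞)) (l, y))
                * A2 y ∂μ := by
          rw [← lintegral_const_mul' 2 _ ENNReal.ofNat_ne_top]
          refine lintegral_congr fun l => ?_
          have hconstm : Measurable fun y : M =>
              SA.indicator (fun _ => (1:ℝ≥0∞)) (l, y) * A2 y :=
            ((measurable_const.indicator hSAm).comp measurable_prodMk_left).mul hA2m
          rw [show c l * (((ENNReal.ofReal l) ^ 2)⁻¹ * (2 * H l))
            = 2 * ((c l * ((ENNReal.ofReal l) ^ 2)⁻¹) * H l) from by ring]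
          congr 1
          rw [step0 l, ← lintegral_const_mul _ hconstm]
          exact lintegral_congr fun y => by ring
        have hly : ∀ y : M, Measurable fun l : ℝ => c l * ((ENNReal.ofReal l) ^ 2)⁻¹ *
            ({l : ℝ | A2 y ^ ((1:ℝ)/2) ≤ ENNReal.ofReal l}.indicator (fun _ => (1:ℝ≥0∞)) l) :=
          fun y => (hcm.mul hinvm).mul (measurable_const.indicator (hslice y))
        have step3 : ∀ y : M, (∫⁻ l in Ioi (0:ℝ),
            (c l * ((ENNReal.ofReal l) ^ 2)⁻¹ * SA.indicator (fun _ => (1:ℝ≥0∞)) (l, y))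
              * A2 y)
            = A2 y * ∫⁻ l in Ioi (0:ℝ), c l * ((ENNReal.ofReal l) ^ 2)⁻¹ *
              ({l : ℝ | A2 y ^ ((1:ℝ)/2) ≤ ENNReal.ofReal l}.indicator (fun _ => (1:ℝ≥0∞)) l) := by
          intro y
          rw [← lintegral_const_mul _ (hly y)]
          refine lintegral_congr fun l => ?_
          have hindeq : SA.indicator (fun _ => (1:ℝ≥0∞)) (l, y)
              = {l : ℝ | A2 y ^ ((1:ℝ)/2) ≤ ENNReal.ofReal l}.indicator
                  (fun _ => (1:ℝ≥0∞)) l := by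
            rw [Set.indicator_apply, Set.indicator_apply]
            by_cases h : A y ≤ ENNReal.ofReal l
            · rw [if_pos (show (l, y) ∈ SA from h),
                if_pos (show l ∈ {l : ℝ | A2 y ^ ((1:ℝ)/2) ≤ ENNReal.ofReal l} from h)]
            · rw [if_neg (show (l, y) ∉ SA from h),
                if_neg (show l ∉ {l : ℝ | A2 y ^ ((1:ℝ)/2) ≤ ENNReal.ofReal l} from h)]
          rw [hindeq]
          ring
        have hum : Measurable (Function.uncurry fun (l : ℝ) (y : M) =>
            (c l * ((ENNReal.ofReal l) ^ 2)⁻¹ * SA.indicator (fun _ => (1:ℝ≥0∞)) (l, y))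
              * A2 y) := by
          refine Measurable.mul ?_ (hA2m.comp measurable_snd)
          exact ((hcm.comp measurable_fst).mul (hinvm.comp measurable_fst)).mul
            (measurable_const.indicator hSAm)
        calc ∫⁻ l in Ioi (0:ℝ), c l * (((ENNReal.ofReal l) ^ 2)⁻¹ * (2 * H l))
            = 2 * ∫⁻ l in Ioi (0:ℝ), ∫⁻ y,
              (c l * ((ENNReal.ofReal l) ^ 2)⁻¹ * SA.indicator (fun _ => (1:ℝ≥0∞)) (l, y))
                * A2 y ∂μ := step1
          _ = 2 * ∫⁻ y, (∫⁻ l in Ioi (0:ℝ),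
              (c l * ((ENNReal.ofReal l) ^ 2)⁻¹ * SA.indicator (fun _ => (1:ℝ≥0∞)) (l, y))
                * A2 y) ∂μ := by rw [lintegral_lintegral_swap hum.aemeasurable]
          _ = 2 * ∫⁻ y, (A2 y * ∫⁻ l in Ioi (0:ℝ), c l * ((ENNReal.ofReal l) ^ 2)⁻¹ *
              ({l : ℝ | A2 y ^ ((1:ℝ)/2) ≤ ENNReal.ofReal l}.indicator
                (fun _ => (1:ℝ≥0∞)) l)) ∂μ := by
              congr 1
              exact lintegral_congr step3
          _ ≤ 2 * ∫⁻ y, ENNReal.ofReal (p / (2-p)) * ((A2 y ^ ((1:ℝ)/2)) ^ p) ∂μ :=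
              mul_le_mul_right (lintegral_mono fun y => aux_term2 hp0 hplt (A2 y)) _
          _ = 2 * (ENNReal.ofReal (p / (2-p)) * ∫⁻ y, A y ^ p ∂μ) := by
              rw [lintegral_const_mul' _ _ ENNReal.ofReal_ne_top]
          _ = ENNReal.ofReal (2 * (p / (2-p))) * ∫⁻ x, A x ^ p ∂μ := by
              rw [← mul_assoc]
              congr 1
              rw [ENNReal.ofReal_mul (by norm_num : (0:ℝ) ≤ 2), ENNReal.ofReal_ofNat]
      calc ∫⁻ x, V x ^ p ∂μ
          ≤ ∫⁻ l in Ioi (0:ℝ), (c l * (ENNReal.ofReal Kc * μ (G l))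
            + c l * (((ENNReal.ofReal l) ^ 2)⁻¹ * (2 * H l))) := by rw [hL]; exact hmono
        _ = (∫⁻ l in Ioi (0:ℝ), c l * (ENNReal.ofReal Kc * μ (G l)))
            + ∫⁻ l in Ioi (0:ℝ), c l * (((ENNReal.ofReal l) ^ 2)⁻¹ * (2 * H l)) :=
            lintegral_add_left hT1m _
        _ ≤ ENNReal.ofReal Kc * (∫⁻ x, A x ^ p ∂μ)
            + ENNReal.ofReal (2 * (p / (2-p))) * ∫⁻ x, A x ^ p ∂μ := by
            rw [hT1]; exact add_le_add le_rfl hT2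
        _ = ENNReal.ofReal Creal * ∫⁻ x, A x ^ p ∂μ := by
            rw [← add_mul, ← ENNReal.ofReal_add hKpos.le (by positivity), hCrealdef]
    -- conclude
    have hfinal : (∫⁻ x, V x ^ p ∂μ) ^ (1/p)
        ≤ ENNReal.ofReal (Creal ^ (1/p)) * (∫⁻ x, A x ^ p ∂μ) ^ (1/p) := by
      calc (∫⁻ x, V x ^ p ∂μ) ^ (1/p)
          ≤ (ENNReal.ofReal Creal * ∫⁻ x, A x ^ p ∂μ) ^ (1/p) :=
            ENNReal.rpow_le_rpow hmain (by positivity)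
        _ = (ENNReal.ofReal Creal) ^ (1/p) * (∫⁻ x, A x ^ p ∂μ) ^ (1/p) :=
            ENNReal.mul_rpow_of_nonneg _ _ (by positivity)
        _ = ENNReal.ofReal (Creal ^ (1/p)) * (∫⁻ x, A x ^ p ∂μ) ^ (1/p) := by
            rw [ENNReal.ofReal_rpow_of_pos hCpos]
    exact hfinal
  · -- case p = 2
    subst hpeq
    refine ⟨1, one_pos, ?_⟩
    intro F hF
    set g : M → ℝ → ℝ≥0∞ := fun y t => F y t ^ 2 / (ENNReal.ofReal t * μ (ball y t))
      with hgdef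
    have hgm : Measurable fun q : M × ℝ => g q.1 q.2 := by
      refine Measurable.div ?_ ?_
      · exact hF.pow_const 2
      · exact (ENNReal.measurable_ofReal.comp measurable_snd).mul (aux_ball_meas μ)
    have halg : ∀ (x : M) (t : ℝ), 0 < t → g x t * μ (ball x t)
        = F x t ^ 2 / ENNReal.ofReal t := by
      intro x t ht
      have hm0 : μ (ball x t) ≠ 0 := (hball x t ht).1.ne'
      have hmt : μ (ball x t) ≠ ⊤ := (hball x t ht).2.ne
      have hc0 : ENNReal.ofReal t ≠ 0 := (ENNReal.ofReal_pos.mpr ht).ne'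
      have hct : ENNReal.ofReal t ≠ ⊤ := ENNReal.ofReal_ne_top
      rw [hgdef]
      simp only
      rw [div_eq_mul_inv, div_eq_mul_inv, ENNReal.mul_inv (Or.inl hc0) (Or.inl hct),
        mul_assoc, mul_assoc, ENNReal.inv_mul_cancel hm0 hmt, mul_one]
    have key : ∫⁻ x, (∫⁻ t in Ioi (0:ℝ), F x t ^ 2 / ENNReal.ofReal t) ∂μ
        = ∫⁻ x, (∫⁻ t in Ioi (0:ℝ), ∫⁻ y in ball x t, g y t ∂μ) ∂μ := by
      have h1 : ∀ x : M, (∫⁻ t in Ioi (0:ℝ), F x t ^ 2 / ENNReal.ofReal t)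
          = ∫⁻ t in Ioi (0:ℝ), g x t * μ (univ ∩ ball x t) := by
        intro x
        refine setLIntegral_congr_fun measurableSet_Ioi
          (fun t ht => ?_)
        rw [univ_inter]
        exact (halg x t ht).symm
      rw [lintegral_congr h1, aux_identC μ g hgm univ MeasurableSet.univ,
        Measure.restrict_univ]
    have hpow : ∀ cc : ℝ≥0∞, (cc ^ ((1:ℝ)/2)) ^ (2:ℝ) = cc := by
      intro cc
      rw [← ENNReal.rpow_mul]
      norm_num
    simp only [hpow]
    rw [key, ENNReal.ofReal_one, one_mul]
end

section
/- Let p ∈ (1,∞) and p' = p/(p−1). For all measurable functions u, v : M × (0,∞) → [0,∞] one has ∫₀^∞ ∫_M u(x,t) v(x,t) dμ(x) dt ≤ ‖𝒜(u)‖_{L^p(μ)} · ‖𝒜(v)‖_{L^{p'}(μ)}. -/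
open MeasureTheory Metric Set ENNReal Function

section Stmt3Aux

variable {M : Type*} [MetricSpace M] [MeasurableSpace M] [BorelSpace M]
  [SecondCountableTopology M]

lemma stmt3_meas_mball (μ : Measure M) [SigmaFinite μ] :
    Measurable fun q : M × ℝ => μ (ball q.1 (Real.sqrt q.2)) := by
  have hS : MeasurableSet {q : (M × ℝ) × M | dist q.2 q.1.1 < Real.sqrt q.1.2} :=
    measurableSet_lt (measurable_snd.dist measurable_fst.fst)
      (Real.continuous_sqrt.measurable.comp measurable_fst.snd)
  have key : ∀ q : M × ℝ, μ (ball q.1 (Real.sqrt q.2)) =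
      ∫⁻ z, ({q : (M × ℝ) × M | dist q.2 q.1.1 < Real.sqrt q.1.2}.indicator
        (fun _ => (1 : ℝ≥0∞))) (q, z) ∂μ := by
    intro q
    have h1 : (fun z => ({q : (M × ℝ) × M | dist q.2 q.1.1 < Real.sqrt q.1.2}.indicator
        (fun _ => (1 : ℝ≥0∞))) (q, z)) = (ball q.1 (Real.sqrt q.2)).indicator 1 := by
      ext z
      by_cases h : z ∈ ball q.1 (Real.sqrt q.2)
      · simp_all [Set.indicator_apply, mem_ball]
      · simp_all [Set.indicator_apply, mem_ball]
    rw [h1, lintegral_indicator_one measurableSet_ball]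
  simp_rw [key]
  exact Measurable.lintegral_prod_right' (measurable_const.indicator hS)


/-- Rewrite the iterated conical integral as an integral over the product measure. -/
lemma stmt3_iter_eq_prod (μ : Measure M) [SigmaFinite μ]
    (g : M → ℝ → ℝ≥0∞) (hg : Measurable (uncurry g)) (y : M) :
    ∫⁻ t in Ioi (0:ℝ), ∫⁻ x in ball y (Real.sqrt t), g x t ∂μ
      = ∫⁻ q, ({q : ℝ × M | dist q.2 y < Real.sqrt q.1}.indicator
          (fun q => g q.2 q.1)) q ∂(((volume : Measure ℝ).restrict (Ioi 0)).prod μ) := by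
  have hS : MeasurableSet {q : ℝ × M | dist q.2 y < Real.sqrt q.1} :=
    measurableSet_lt (measurable_snd.dist measurable_const)
      (Real.continuous_sqrt.measurable.comp measurable_fst)
  have hmeas : Measurable ({q : ℝ × M | dist q.2 y < Real.sqrt q.1}.indicator
      (fun q : ℝ × M => g q.2 q.1)) :=
    (hg.comp (measurable_snd.prodMk measurable_fst)).indicator hS
  rw [lintegral_prod _ hmeas.aemeasurable]
  refine lintegral_congr fun t => ?_
  rw [← lintegral_indicator measurableSet_ball]
  refine lintegral_congr fun x => ?_
  by_cases h : dist x y < Real.sqrt t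
  · simp [Set.indicator_apply, mem_ball, h]
  · simp [Set.indicator_apply, mem_ball, h]


/-- Measurability in `y` of the conical integral. -/
lemma stmt3_meas_A (μ : Measure M) [SigmaFinite μ]
    (g : M → ℝ → ℝ≥0∞) (hg : Measurable (uncurry g)) :
    Measurable fun y => ∫⁻ t in Ioi (0:ℝ), ∫⁻ x in ball y (Real.sqrt t), g x t ∂μ := by
  have hS : MeasurableSet {r : M × ℝ × M | dist r.2.2 r.1 < Real.sqrt r.2.1} :=
    measurableSet_lt (measurable_snd.snd.dist measurable_fst)
      (Real.continuous_sqrt.measurable.comp measurable_snd.fst)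
  set F : M × ℝ × M → ℝ≥0∞ :=
    ({r : M × ℝ × M | dist r.2.2 r.1 < Real.sqrt r.2.1}.indicator
      (fun r => g r.2.2 r.2.1)) with hF
  have hFm : Measurable F :=
    (hg.comp (measurable_snd.snd.prodMk measurable_snd.fst)).indicator hS
  have key : ∀ y, (∫⁻ t in Ioi (0:ℝ), ∫⁻ x in ball y (Real.sqrt t), g x t ∂μ)
      = ∫⁻ q, F (y, q) ∂(((volume : Measure ℝ).restrict (Ioi 0)).prod μ) := by
    intro y
    rw [stmt3_iter_eq_prod μ g hg y]
    refine lintegral_congr fun q => ?_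
    by_cases h : dist q.2 y < Real.sqrt q.1
    · simp [hF, Set.indicator_apply, h]
    · simp [hF, Set.indicator_apply, h]
  simp_rw [key]
  exact Measurable.lintegral_prod_right' hFm


/-- Fubini-type expansion. -/
lemma stmt3_fubini (μ : Measure M) [SigmaFinite μ]
    (hball : ∀ (x : M) (r : ℝ), 0 < r → 0 < μ (ball x r) ∧ μ (ball x r) < ⊤)
    (g : M → ℝ → ℝ≥0∞) (hg : Measurable (uncurry g)) :
    ∫⁻ y, (∫⁻ t in Ioi (0:ℝ), ∫⁻ x in ball y (Real.sqrt t),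
        g x t / μ (ball x (Real.sqrt t)) ∂μ) ∂μ
      = ∫⁻ t in Ioi (0:ℝ), ∫⁻ x, g x t ∂μ := by
  set ν := (volume : Measure ℝ).restrict (Ioi 0) with hν
  set f : M → ℝ → ℝ≥0∞ := fun x t => g x t / μ (ball x (Real.sqrt t)) with hf
  have hfm : Measurable (uncurry f) := hg.div (stmt3_meas_mball μ)
  have hS : MeasurableSet {r : M × ℝ × M | dist r.2.2 r.1 < Real.sqrt r.2.1} :=
    measurableSet_lt (measurable_snd.snd.dist measurable_fst)
      (Real.continuous_sqrt.measurable.comp measurable_snd.fst)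
  set F : M → ℝ × M → ℝ≥0∞ := fun y q =>
    ({r : M × ℝ × M | dist r.2.2 r.1 < Real.sqrt r.2.1}.indicator
      (fun r => f r.2.2 r.2.1)) (y, q) with hF
  have hFm : Measurable (uncurry F) :=
    (hfm.comp (measurable_snd.snd.prodMk measurable_snd.fst)).indicator hS
  calc ∫⁻ y, (∫⁻ t in Ioi (0:ℝ), ∫⁻ x in ball y (Real.sqrt t), f x t ∂μ) ∂μ
      = ∫⁻ y, ∫⁻ q, F y q ∂(ν.prod μ) ∂μ := by
        refine lintegral_congr fun y => ?_
        rw [stmt3_iter_eq_prod μ f hfm y]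
        refine lintegral_congr fun q => ?_
        by_cases h : dist q.2 y < Real.sqrt q.1
        · simp [hF, Set.indicator_apply, h]
        · simp [hF, Set.indicator_apply, h]
    _ = ∫⁻ q, ∫⁻ y, F y q ∂μ ∂(ν.prod μ) := lintegral_lintegral_swap hFm.aemeasurable
    _ = ∫⁻ q, f q.2 q.1 * μ (ball q.2 (Real.sqrt q.1)) ∂(ν.prod μ) := by
        refine lintegral_congr fun q => ?_
        have h1 : (fun y => F y q)
            = (ball q.2 (Real.sqrt q.1)).indicator (fun _ => f q.2 q.1) := by
          ext y
          by_cases h : dist q.2 y < Real.sqrt q.1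
          · have h' : dist y q.2 < Real.sqrt q.1 := by rwa [dist_comm]
            simp [hF, Set.indicator_apply, h, mem_ball, h']
          · have h' : ¬ dist y q.2 < Real.sqrt q.1 := by rwa [dist_comm]
            simp [hF, Set.indicator_apply, h, mem_ball, h']
        rw [h1, lintegral_indicator_const measurableSet_ball]
    _ = ∫⁻ t in Ioi (0:ℝ), ∫⁻ x, f x t * μ (ball x (Real.sqrt t)) ∂μ := by
        refine lintegral_prod _ ?_
        exact ((hfm.comp (measurable_snd.prodMk measurable_fst)).mul
          ((stmt3_meas_mball μ).comp (measurable_snd.prodMk measurable_fst))).aemeasurable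
    _ = ∫⁻ t in Ioi (0:ℝ), ∫⁻ x, g x t ∂μ := by
        refine setLIntegral_congr_fun measurableSet_Ioi (fun t ht => ?_)
        refine lintegral_congr fun x => ?_
        have hst : 0 < Real.sqrt t := Real.sqrt_pos.2 ht
        exact ENNReal.div_mul_cancel (hball x _ hst).1.ne' (hball x _ hst).2.ne


/-- Pointwise Cauchy–Schwarz in the cone. -/
lemma stmt3_CS (μ : Measure M) [SigmaFinite μ]
    (hball : ∀ (x : M) (r : ℝ), 0 < r → 0 < μ (ball x r) ∧ μ (ball x r) < ⊤)
    (u v : M → ℝ → ℝ≥0∞)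
    (hu : Measurable (uncurry u)) (hv : Measurable (uncurry v)) (y : M) :
    ∫⁻ t in Ioi (0:ℝ), ∫⁻ x in ball y (Real.sqrt t),
        u x t * v x t / μ (ball x (Real.sqrt t)) ∂μ
      ≤ (∫⁻ t in Ioi (0:ℝ), ∫⁻ x in ball y (Real.sqrt t),
          (u x t) ^ 2 / μ (ball x (Real.sqrt t)) ∂μ) ^ ((1:ℝ)/2)
        * (∫⁻ t in Ioi (0:ℝ), ∫⁻ x in ball y (Real.sqrt t),
          (v x t) ^ 2 / μ (ball x (Real.sqrt t)) ∂μ) ^ ((1:ℝ)/2) := by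
  set ν := (volume : Measure ℝ).restrict (Ioi 0) with hν
  set S : Set (ℝ × M) := {q : ℝ × M | dist q.2 y < Real.sqrt q.1} with hSdef
  have hS : MeasurableSet S :=
    measurableSet_lt (measurable_snd.dist measurable_const)
      (Real.continuous_sqrt.measurable.comp measurable_fst)
  set m : ℝ × M → ℝ≥0∞ := fun q => μ (ball q.2 (Real.sqrt q.1)) with hmdef
  have hm : Measurable m :=
    (stmt3_meas_mball μ).comp (measurable_snd.prodMk measurable_fst)
  have hmem : ∀ q ∈ S, m q ≠ 0 ∧ m q ≠ ⊤ := by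
    intro q hq
    have h0 : 0 < Real.sqrt q.1 := lt_of_le_of_lt dist_nonneg hq
    exact ⟨(hball q.2 _ h0).1.ne', (hball q.2 _ h0).2.ne⟩
  set fU : ℝ × M → ℝ≥0∞ :=
    S.indicator (fun q => u q.2 q.1 * m q ^ (-(1/2) : ℝ)) with hfUdef
  set fV : ℝ × M → ℝ≥0∞ :=
    S.indicator (fun q => v q.2 q.1 * m q ^ (-(1/2) : ℝ)) with hfVdef
  have hfU : Measurable fU :=
    ((hu.comp (measurable_snd.prodMk measurable_fst)).mul
      (hm.pow_const _)).indicator hS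
  have hfV : Measurable fV :=
    ((hv.comp (measurable_snd.prodMk measurable_fst)).mul
      (hm.pow_const _)).indicator hS
  have ha : ∀ q, fU q * fV q
      = S.indicator (fun q => u q.2 q.1 * v q.2 q.1 / m q) q := by
    intro q
    by_cases hq : q ∈ S
    · obtain ⟨hm0, hmt⟩ := hmem q hq
      simp only [hfUdef, hfVdef, Set.indicator_of_mem hq]
      rw [mul_mul_mul_comm, ← ENNReal.rpow_add _ _ hm0 hmt,
        show (-(1/2:ℝ)) + (-(1/2)) = -1 by norm_num, ENNReal.rpow_neg_one,
        ← div_eq_mul_inv]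
    · simp [hfUdef, hfVdef, Set.indicator_of_notMem hq]
  have hb : ∀ (w : M → ℝ → ℝ≥0∞) q,
      (S.indicator (fun q => w q.2 q.1 * m q ^ (-(1/2) : ℝ))) q ^ (2:ℝ)
      = S.indicator (fun q => (w q.2 q.1) ^ 2 / m q) q := by
    intro w q
    by_cases hq : q ∈ S
    · obtain ⟨hm0, hmt⟩ := hmem q hq
      simp only [Set.indicator_of_mem hq]
      rw [ENNReal.mul_rpow_of_nonneg _ _ (by norm_num : (0:ℝ) ≤ 2),
        ← ENNReal.rpow_mul, show (-(1/2:ℝ)) * 2 = -1 by norm_num,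
        ENNReal.rpow_neg_one, ENNReal.rpow_two, ← div_eq_mul_inv]
    · simp only [Set.indicator_of_notMem hq]
      rw [ENNReal.zero_rpow_of_pos (by norm_num : (0:ℝ) < 2)]
  have htwo : (2:ℝ).HolderConjugate 2 := ⟨by norm_num, by norm_num, by norm_num⟩
  calc ∫⁻ t in Ioi (0:ℝ), ∫⁻ x in ball y (Real.sqrt t),
        u x t * v x t / μ (ball x (Real.sqrt t)) ∂μ
      = ∫⁻ q, (fU * fV) q ∂(ν.prod μ) := by
        rw [stmt3_iter_eq_prod μ (fun x t => u x t * v x t / μ (ball x (Real.sqrt t)))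
          ((hu.mul hv).div (stmt3_meas_mball μ)) y]
        exact lintegral_congr fun q => (ha q).symm
    _ ≤ (∫⁻ q, fU q ^ (2:ℝ) ∂(ν.prod μ)) ^ ((1:ℝ)/2)
        * (∫⁻ q, fV q ^ (2:ℝ) ∂(ν.prod μ)) ^ ((1:ℝ)/2) :=
        ENNReal.lintegral_mul_le_Lp_mul_Lq _ htwo hfU.aemeasurable hfV.aemeasurable
    _ = _ := by
        rw [stmt3_iter_eq_prod μ (fun x t => (u x t) ^ 2 / μ (ball x (Real.sqrt t)))
          (by exact (hu.pow_const 2).div (stmt3_meas_mball μ)) y,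
          stmt3_iter_eq_prod μ (fun x t => (v x t) ^ 2 / μ (ball x (Real.sqrt t)))
          (by exact (hv.pow_const 2).div (stmt3_meas_mball μ)) y]
        congr 1
        · congr 1
          exact lintegral_congr fun q => hb u q
        · congr 1
          exact lintegral_congr fun q => hb v q

end Stmt3Aux

open MeasureTheory Metric Set ENNReal

/-- Let `p ∈ (1,∞)` and `p' = p/(p−1)`. For all measurable
`u, v : M × (0,∞) → [0,∞]` one has
`∫₀^∞ ∫_M u v dμ dt ≤ ‖𝒜(u)‖_{L^p(μ)} ‖𝒜(v)‖_{L^{p'}(μ)}`, where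
`𝒜(w)(y) = (∫₀^∞ ∫_{B(y,√t)} w(x,t)² dμ(x) dt/μ(B(x,√t)))^{1/2}`. -/
theorem stmt_3
    {M : Type*} [MetricSpace M] [MeasurableSpace M] [BorelSpace M]
    [SecondCountableTopology M]
    (μ : Measure M)
    (hball : ∀ (x : M) (r : ℝ), 0 < r → 0 < μ (ball x r) ∧ μ (ball x r) < ⊤)
    (p : ℝ) (hp : 1 < p)
    (u v : M → ℝ → ℝ≥0∞)
    (hu : Measurable (Function.uncurry u)) (hv : Measurable (Function.uncurry v)) :
    ∫⁻ t in Ioi (0:ℝ), (∫⁻ x, u x t * v x t ∂μ)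
      ≤ (∫⁻ y, ((∫⁻ t in Ioi (0:ℝ), ∫⁻ x in ball y (Real.sqrt t),
            (u x t) ^ 2 / μ (ball x (Real.sqrt t)) ∂μ) ^ ((1:ℝ)/2)) ^ p ∂μ) ^ (1/p)
        * (∫⁻ y, ((∫⁻ t in Ioi (0:ℝ), ∫⁻ x in ball y (Real.sqrt t),
            (v x t) ^ 2 / μ (ball x (Real.sqrt t)) ∂μ) ^ ((1:ℝ)/2)) ^ (p/(p-1)) ∂μ)
          ^ (1/(p/(p-1))) := by
  haveI : IsLocallyFiniteMeasure μ :=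
    ⟨fun x => ⟨ball x 1, ball_mem_nhds x one_pos, (hball x 1 one_pos).2⟩⟩
  have hpq : p.HolderConjugate (p/(p-1)) :=
    (Real.holderConjugate_iff_eq_conjExponent hp).2 rfl
  have hAu : Measurable fun y => ∫⁻ t in Ioi (0:ℝ), ∫⁻ x in ball y (Real.sqrt t),
      (u x t) ^ 2 / μ (ball x (Real.sqrt t)) ∂μ :=
    stmt3_meas_A μ _ ((hu.pow_const 2).div (stmt3_meas_mball μ))
  have hAv : Measurable fun y => ∫⁻ t in Ioi (0:ℝ), ∫⁻ x in ball y (Real.sqrt t),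
      (v x t) ^ 2 / μ (ball x (Real.sqrt t)) ∂μ :=
    stmt3_meas_A μ _ ((hv.pow_const 2).div (stmt3_meas_mball μ))
  calc ∫⁻ t in Ioi (0:ℝ), (∫⁻ x, u x t * v x t ∂μ)
      = ∫⁻ y, (∫⁻ t in Ioi (0:ℝ), ∫⁻ x in ball y (Real.sqrt t),
          u x t * v x t / μ (ball x (Real.sqrt t)) ∂μ) ∂μ :=
        (stmt3_fubini μ hball (fun x t => u x t * v x t) (by exact hu.mul hv)).symm
    _ ≤ ∫⁻ y, ((∫⁻ t in Ioi (0:ℝ), ∫⁻ x in ball y (Real.sqrt t),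
            (u x t) ^ 2 / μ (ball x (Real.sqrt t)) ∂μ) ^ ((1:ℝ)/2)
          * (∫⁻ t in Ioi (0:ℝ), ∫⁻ x in ball y (Real.sqrt t),
            (v x t) ^ 2 / μ (ball x (Real.sqrt t)) ∂μ) ^ ((1:ℝ)/2)) ∂μ :=
        lintegral_mono fun y => stmt3_CS μ hball u v hu hv y
    _ ≤ _ := by
        have h := ENNReal.lintegral_mul_le_Lp_mul_Lq μ hpq
          (hAu.pow_const ((1:ℝ)/2)).aemeasurable (hAv.pow_const ((1:ℝ)/2)).aemeasurable
        simpa [Pi.mul_apply] using h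
end
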